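/- Let W be an n-dimensional vector space with basis e_1,...,e_n, and on the exterior algebra Λ*W define E = contraction with l_E and F = wedge with l_F, where l_E = Σ_j (-1)^{p(λ_{<j})} q^{-λ_{>j}} e_j and l_F = Σ_j (-1)^{p(λ_{<j})} q^{λ_{<j}} [λ_j]_q e_j. Then EF + FE = [λ_1 + ... + λ_n]_q · id on Λ*W. -/

import Mathlib

set_option synthInstance.maxHeartbeats 1000000
set_option maxHeartbeats 1000000

noncomputable section

abbrev Rq : Type := RatFunc ℂ
abbrev qq : Rq := RatFunc.X

/-- `⟨h₁+h₂, μ⟩` for an integral weight `μ = (μ₁, μ₂)`. -/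
def wval (w : ℤ × ℤ) : ℤ := w.1 + w.2

/-- Parity of a weight: the coefficient of `ε₂`. -/
def wpar (w : ℤ × ℤ) : ℤ := w.2

/-- The quantum integer `[m]_q = (q^m - q^{-m})/(q - q⁻¹)`. -/
def qint (m : ℤ) : Rq := (qq ^ m - qq ^ (-m)) / (qq - qq⁻¹)

lemma qq_ne_zero : (qq : Rq) ≠ 0 := RatFunc.X_ne_zero

lemma scalar_key (n : ℕ) (v : ℕ → ℤ) :
    ∑ k ∈ Finset.range n,
      qq ^ (2 * (∑ i ∈ Finset.range k, v i) + v k - (∑ i ∈ Finset.range n, v i)) *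
        (qq ^ (v k) - qq ^ (-(v k)))
    = qq ^ (∑ i ∈ Finset.range n, v i) - qq ^ (-(∑ i ∈ Finset.range n, v i)) := by
  set S : ℤ := ∑ i ∈ Finset.range n, v i with hS
  have key : ∀ k, qq ^ (2 * (∑ i ∈ Finset.range k, v i) + v k - S) *
      (qq ^ (v k) - qq ^ (-(v k)))
      = qq ^ (2 * (∑ i ∈ Finset.range (k+1), v i) - S) -
        qq ^ (2 * (∑ i ∈ Finset.range k, v i) - S) := by
    intro k
    rw [mul_sub, ← zpow_add₀ qq_ne_zero, ← zpow_add₀ qq_ne_zero,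
      Finset.sum_range_succ]
    ring_nf
  calc ∑ k ∈ Finset.range n, qq ^ (2 * (∑ i ∈ Finset.range k, v i) + v k - S) *
        (qq ^ (v k) - qq ^ (-(v k)))
      = ∑ k ∈ Finset.range n, (qq ^ (2 * (∑ i ∈ Finset.range (k+1), v i) - S) -
          qq ^ (2 * (∑ i ∈ Finset.range k, v i) - S)) := by
        exact Finset.sum_congr rfl fun k _ => key k
    _ = qq ^ (2 * S - S) - qq ^ (2 * (∑ i ∈ Finset.range 0, v i) - S) :=
        Finset.sum_range_sub (fun k => qq ^ (2 * (∑ i ∈ Finset.range k, v i) - S)) n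
    _ = qq ^ S - qq ^ (-S) := by norm_num; ring_nf


/-- Let `W` be an `n`-dimensional space with basis `e₁, …, eₙ` and
let `Λ` be its exterior algebra, abstracted here via operators
`wedge v = (v ∧ ·)` and `ctr v = (v ⌟ ·)` satisfying the canonical anticommutation
relation `(eᵢ ⌟)(eⱼ ∧) + (eⱼ ∧)(eᵢ ⌟) = δᵢⱼ id`.  With
`l_E = Σⱼ (-1)^{p(λ_{<j})} q^{-λ_{>j}} eⱼ` and
`l_F = Σⱼ (-1)^{p(λ_{<j})} q^{λ_{<j}} [λⱼ]_q eⱼ`, the operators `E = l_E ⌟` and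
`F = l_F ∧` satisfy `EF + FE = [λ₁ + ⋯ + λₙ]_q · id`. -/
theorem stmt4 {n : ℕ} (wt : Fin n → ℤ × ℤ)
    {W Λ : Type*} [AddCommGroup W] [Module Rq W] [AddCommGroup Λ] [Module Rq Λ]
    (e : Fin n → W)
    (wedge ctr : W →ₗ[Rq] Module.End Rq Λ)
    (hcomm : ∀ i j : Fin n,
      ctr (e i) * wedge (e j) + wedge (e j) * ctr (e i) =
        if i = j then 1 else 0) :
    let psumLt : Fin n → ℤ := fun j => ∑ i ∈ Finset.univ.filter (· < j), wpar (wt i)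
    let vsumLt : Fin n → ℤ := fun j => ∑ i ∈ Finset.univ.filter (· < j), wval (wt i)
    let vsumGt : Fin n → ℤ := fun j => ∑ i ∈ Finset.univ.filter (j < ·), wval (wt i)
    let lE : W := ∑ j, (((-1 : Rq) ^ psumLt j) * qq ^ (-(vsumGt j))) • e j
    let lF : W := ∑ j, (((-1 : Rq) ^ psumLt j) * qq ^ (vsumLt j) * qint (wval (wt j))) • e j
    ctr lE * wedge lF + wedge lF * ctr lE =
      qint (∑ j, wval (wt j)) • (1 : Module.End Rq Λ) := by
  intro psumLt vsumLt vsumGt lE lF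
  set a : Fin n → Rq := fun j => ((-1 : Rq) ^ psumLt j) * qq ^ (-(vsumGt j)) with ha
  set b : Fin n → Rq :=
    fun j => ((-1 : Rq) ^ psumLt j) * qq ^ (vsumLt j) * qint (wval (wt j)) with hb
  -- Step 1: operator computation
  have hE : ctr lE = ∑ j, a j • ctr (e j) := by
    simp only [lE, map_sum, map_smul]; rfl
  have hF : wedge lF = ∑ j, b j • wedge (e j) := by
    simp only [lF, map_sum, map_smul]; rfl
  have step1 : ctr lE * wedge lF + wedge lF * ctr lE = (∑ j, a j * b j) • 1 := by
    rw [hE, hF, Finset.sum_mul_sum, Finset.sum_mul_sum]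
    rw [show (∑ j : Fin n, ∑ i : Fin n, (b j • wedge (e j)) * (a i • ctr (e i)))
        = ∑ i : Fin n, ∑ j : Fin n, (b j • wedge (e j)) * (a i • ctr (e i)) from
      Finset.sum_comm]
    rw [← Finset.sum_add_distrib]
    have : ∀ i ∈ (Finset.univ : Finset (Fin n)),
        ((∑ j, (a i • ctr (e i)) * (b j • wedge (e j))) +
          ∑ j, (b j • wedge (e j)) * (a i • ctr (e i)))
        = (a i * b i) • 1 := by
      intro i _
      rw [← Finset.sum_add_distrib]
      have h2 : ∀ j ∈ (Finset.univ : Finset (Fin n)),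
          (a i • ctr (e i)) * (b j • wedge (e j)) +
            (b j • wedge (e j)) * (a i • ctr (e i))
          = if i = j then (a i * b j) • 1 else 0 := by
        intro j _
        rw [smul_mul_smul_comm, smul_mul_smul_comm, mul_comm (b j) (a i),
          ← smul_add, hcomm i j]
        split <;> simp
      rw [Finset.sum_congr rfl h2, Finset.sum_ite_eq Finset.univ i
        (fun j => (a i * b j) • (1 : Module.End Rq Λ))]
      simp
    rw [Finset.sum_congr rfl this, ← Finset.sum_smul]
  rw [step1]
  congr 1
  -- Step 2: the scalar identity
  -- extension of the values to ℕ
  set v : ℕ → ℤ := fun k => if h : k < n then wval (wt ⟨k, h⟩) else 0 with hv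
  have hvj : ∀ j : Fin n, wval (wt j) = v j.val := by
    intro j
    show wval (wt j) = if h : j.val < n then wval (wt ⟨j.val, h⟩) else 0
    rw [dif_pos j.isLt, Fin.eta]
  have hvS : (∑ j, wval (wt j)) = ∑ k ∈ Finset.range n, v k := by
    rw [Finset.sum_congr rfl (fun j _ => hvj j)]
    exact Fin.sum_univ_eq_sum_range (fun k => v k) n
  set S : ℤ := ∑ k ∈ Finset.range n, v k with hS
  have hLt : ∀ j : Fin n, vsumLt j = ∑ k ∈ Finset.range j.val, v k := by
    intro j
    rw [show vsumLt j = ∑ i ∈ Finset.univ.filter (· < j), wval (wt i) from rfl,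
      Finset.sum_congr rfl (fun i _ => hvj i)]
    rw [show (∑ i ∈ Finset.univ.filter (· < j), v i.val)
        = ∑ i : Fin n, if i < j then v i.val else 0 from
      (Finset.sum_filter _ _)]
    have : ∀ i : Fin n, (if i < j then v i.val else 0)
        = (fun k => if k < j.val then v k else 0) i.val := by
      intro i; simp only [Fin.lt_def]
    rw [Finset.sum_congr rfl (fun i _ => this i),
      Fin.sum_univ_eq_sum_range (fun k => if k < j.val then v k else 0) n,
      ← Finset.sum_filter]
    congr 1
    ext k
    simp only [Finset.mem_filter, Finset.mem_range]
    constructor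
    · exact fun h => h.2
    · exact fun h => ⟨lt_trans h j.isLt, h⟩
  have hGt : ∀ j : Fin n, vsumGt j = S - ∑ k ∈ Finset.range (j.val + 1), v k := by
    intro j
    rw [show vsumGt j = ∑ i ∈ Finset.univ.filter (j < ·), wval (wt i) from rfl,
      Finset.sum_congr rfl (fun i _ => hvj i)]
    rw [show (∑ i ∈ Finset.univ.filter (j < ·), v i.val)
        = ∑ i : Fin n, if j < i then v i.val else 0 from
      (Finset.sum_filter _ _)]
    have : ∀ i : Fin n, (if j < i then v i.val else 0)
        = (fun k => if j.val < k then v k else 0) i.val := by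
      intro i; simp only [Fin.lt_def]
    rw [Finset.sum_congr rfl (fun i _ => this i),
      Fin.sum_univ_eq_sum_range (fun k => if j.val < k then v k else 0) n,
      ← Finset.sum_filter]
    have hset : (Finset.range n).filter (j.val < ·)
        = Finset.range n \ Finset.range (j.val + 1) := by
      ext k
      simp only [Finset.mem_filter, Finset.mem_range, Finset.mem_sdiff]
      omega
    rw [hset, Finset.sum_sdiff_eq_sub (Finset.range_subset_range.2 j.isLt), hS]
  -- compute a j * b j
  have hab : ∀ j : Fin n, a j * b j
      = qq ^ (2 * (∑ k ∈ Finset.range j.val, v k) + v j.val - S) *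
          ((qq ^ (v j.val) - qq ^ (-(v j.val))) * (qq - qq⁻¹)⁻¹) := by
    intro j
    have hsign : ((-1 : Rq) ^ psumLt j) * ((-1 : Rq) ^ psumLt j) = 1 := by
      rw [← zpow_add₀ (by norm_num : (-1 : Rq) ≠ 0)]
      exact Even.neg_one_zpow ⟨psumLt j, rfl⟩
    have habj : a j * b j = ((-1:Rq) ^ psumLt j * (-1:Rq) ^ psumLt j) *
        (qq ^ (-(vsumGt j)) * qq ^ (vsumLt j) * qint (wval (wt j))) := by
      rw [ha, hb]; ring
    rw [habj, hsign, one_mul, ← zpow_add₀ qq_ne_zero, qint, hvj j, div_eq_mul_inv]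
    have hexp : -(vsumGt j) + vsumLt j
        = 2 * (∑ k ∈ Finset.range j.val, v k) + v j.val - S := by
      rw [hLt j, hGt j, Finset.sum_range_succ]; ring
    rw [hexp]
  rw [Finset.sum_congr rfl (fun j _ => hab j)]
  rw [show (∑ j : Fin n, qq ^ (2 * (∑ k ∈ Finset.range j.val, v k) + v j.val - S) *
      ((qq ^ (v j.val) - qq ^ (-(v j.val))) * (qq - qq⁻¹)⁻¹))
    = ∑ k ∈ Finset.range n, qq ^ (2 * (∑ i ∈ Finset.range k, v i) + v k - S) *
      ((qq ^ (v k) - qq ^ (-(v k))) * (qq - qq⁻¹)⁻¹) from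
    Fin.sum_univ_eq_sum_range (fun k => qq ^ (2 * (∑ i ∈ Finset.range k, v i) + v k - S) *
      ((qq ^ (v k) - qq ^ (-(v k))) * (qq - qq⁻¹)⁻¹)) n]
  have key := scalar_key n v
  rw [← hS] at key
  rw [hvS, qint, div_eq_mul_inv, ← key, Finset.sum_mul]
  exact Finset.sum_congr rfl fun k _ => by ring

end
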